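/- arXiv:0907.3681 — 2 statements merged into one kernel-verified Lean document; each statement's English description precedes it below -/
import Mathlib

section
/- Let $F$ be a nonabelian free group with finite free basis $X$ of size at least 2. For any nontrivial elements $\gamma_1, \dots, \gamma_n \in F$ with $\|\gamma_j\|_X \leq d$ for all $j$, there exists a nontrivial element $\delta \in \bigcap_{j=1}^n \overline{\langle\gamma_j\rangle}$ with $\|\delta\|_X \leq 6 d n^2$. -/
open FreeGroup

/-- An element of a free group commuting with two distinct generators is trivial. -/
lemma aux_central {T : Type*} {t₁ t₂ : T} (hne : t₁ ≠ t₂) (w : FreeGroup T)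
    (h₁ : Commute w (FreeGroup.of t₁)) (h₂ : Commute w (FreeGroup.of t₂)) : w = 1 := by
  classical
  by_contra hw
  have hL : w.toWord ≠ [] := fun h => hw (toWord_eq_nil_iff.mp h)
  obtain ⟨⟨x, bx⟩, L', hLw⟩ : ∃ a L', w.toWord = a :: L' := by
    cases h : w.toWord with
    | nil => exact absurd h hL
    | cons a l => exact ⟨a, l, rfl⟩
  set y : T := if x = t₁ then t₂ else t₁ with hy
  have hyx : y ≠ x := by
    rw [hy]; split_ifs with h
    · rw [h]; exact hne.symm
    · exact fun hc => h hc.symm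
  have hcomm : Commute w (FreeGroup.of y) := by
    rw [hy]; split_ifs <;> assumption
  have hwmk : w = FreeGroup.mk ((x, bx) :: L') := by rw [← hLw, mk_toWord]
  have hofy : (FreeGroup.of y) = FreeGroup.mk [(y, true)] := by
    rw [← toWord_of y, mk_toWord]
  have hmul : FreeGroup.mk ((y, true) :: (x, bx) :: L')
      = FreeGroup.mk (((x, bx) :: L') ++ [(y, true)]) := by
    have := hcomm.symm.eq
    rw [hwmk, hofy, mul_mk, mul_mk] at this
    simpa using this
  have hEq : reduce ((y, true) :: (x, bx) :: L') = reduce (((x, bx) :: L') ++ [(y, true)]) := by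
    rw [← toWord_mk, ← toWord_mk, hmul]
  have hred : reduce ((x, bx) :: L') = (x, bx) :: L' := by
    rw [← hLw]; exact reduce_toWord w
  have hLHS : reduce ((y, true) :: (x, bx) :: L') = (y, true) :: (x, bx) :: L' := by
    rw [reduce.cons, hred]
    simp [hyx]
  rw [hLHS] at hEq
  -- Now use lengths: RHS reduces from a list of the same length
  have hredRHS : Red (((x, bx) :: L') ++ [(y, true)]) ((y, true) :: (x, bx) :: L') := by
    rw [hEq]; exact reduce.red
  have hlen : (((x, bx) :: L') ++ [(y, true)]).length = ((y, true) :: (x, bx) :: L').length := by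
    simp
  have := hredRHS.sublist.eq_of_length (by simpa using hlen.symm)
  rw [List.cons_append] at this
  exact hyx (congrArg Prod.fst (List.head_eq_of_cons_eq this))

lemma aux_of_commute {T : Type*} [Subsingleton T] (x : T) (v : FreeGroup T) :
    Commute (FreeGroup.of x) v := by
  induction v using FreeGroup.induction_on with
  | C1 => exact Commute.one_right _
  | of y => rw [Subsingleton.elim x y]
  | inv_of y h => exact h.inv_right
  | mul u v hu hv => exact hu.mul_right hv

lemma aux_comm_subsingleton {T : Type*} [Subsingleton T] (u v : FreeGroup T) :
    Commute u v := by
  induction u using FreeGroup.induction_on with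
  | C1 => exact Commute.one_left _
  | of y => exact aux_of_commute y v
  | inv_of y h => exact h.inv_left
  | mul a b ha hb => exact ha.mul_left hb

lemma aux_pow_subsingleton {T : Type*} [Subsingleton T] (t : T) (g : FreeGroup T) :
    ∃ m : ℤ, g = FreeGroup.of t ^ m := by
  induction g using FreeGroup.induction_on with
  | C1 => exact ⟨0, by simp⟩
  | of y => exact ⟨1, by rw [Subsingleton.elim y t, zpow_one]⟩
  | inv_of y h => obtain ⟨m, hm⟩ := h; exact ⟨-m, by rw [hm, ← zpow_neg]⟩
  | mul a b ha hb =>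
      obtain ⟨m, hm⟩ := ha; obtain ⟨k, hk⟩ := hb
      exact ⟨m + k, by rw [hm, hk, zpow_add]⟩

lemma aux_infinite {G : Type*} [Group G] [IsFreeGroup G] [Nontrivial G] : Infinite G := by
  let e := IsFreeGroup.toFreeGroup G
  rcases isEmpty_or_nonempty (IsFreeGroup.Generators G) with h | h
  · exfalso
    obtain ⟨a, b, hab⟩ := exists_pair_ne G
    apply hab
    apply e.injective
    classical
    have h1 : (e a).toWord = [] := by
      cases h' : (e a).toWord with
      | nil => rfl
      | cons p l => exact (h.false p.1).elim
    have h2 : (e b).toWord = [] := by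
      cases h' : (e b).toWord with
      | nil => rfl
      | cons p l => exact (h.false p.1).elim
    rw [toWord_eq_nil_iff.mp h1, toWord_eq_nil_iff.mp h2]
  · exact Infinite.of_injective e.symm e.symm.injective

/-- transitivity of commutation in free groups -/
lemma aux_comm_trans {G : Type*} [Group G] [IsFreeGroup G] {a b c : G} (ha : a ≠ 1)
    (hab : Commute a b) (hac : Commute a c) : Commute b c := by
  classical
  set K := Subgroup.closure ({a, b, c} : Set G) with hK
  have haK : a ∈ K := Subgroup.subset_closure (by simp)
  have hbK : b ∈ K := Subgroup.subset_closure (by simp)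
  have hcK : c ∈ K := Subgroup.subset_closure (by simp)
  have hcent : ∀ g ∈ K, Commute a g := by
    intro g hg
    induction hg using Subgroup.closure_induction with
    | mem x hx =>
        rcases hx with h | h | h
        · rw [h]
        · rw [h]; exact hab
        · rw [h]; exact hac
    | one => exact Commute.one_right _
    | mul x y hx hy hx' hy' => exact hx'.mul_right hy'
    | inv x hx hx' => exact hx'.inv_right
  have hcentK : ∀ u : K, Commute (⟨a, haK⟩ : K) u := by
    intro u
    have := hcent u.1 u.2
    exact Subtype.ext this.eq
  let e := IsFreeGroup.toFreeGroup K
  rcases subsingleton_or_nontrivial (IsFreeGroup.Generators K) with hT | hT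
  · -- K is commutative
    have : Commute (⟨b, hbK⟩ : K) (⟨c, hcK⟩ : K) := by
      have h := aux_comm_subsingleton (e ⟨b, hbK⟩) (e ⟨c, hcK⟩)
      apply e.injective
      rw [_root_.map_mul, _root_.map_mul]
      exact h.eq
    exact congrArg Subtype.val this.eq
  · exfalso
    obtain ⟨t₁, t₂, hne⟩ := exists_pair_ne (IsFreeGroup.Generators K)
    have hw1 : e ⟨a, haK⟩ ≠ 1 := by
      intro h
      have := e.injective (h.trans (_root_.map_one e).symm)
      exact ha (congrArg Subtype.val this)
    have hcw : ∀ v : FreeGroup (IsFreeGroup.Generators K), Commute (e ⟨a, haK⟩) v := by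
      intro v
      have h := hcentK (e.symm v)
      have := congrArg e h.eq
      rw [_root_.map_mul, _root_.map_mul, e.apply_symm_apply] at this
      exact this
    exact hw1 (aux_central hne _ (hcw _) (hcw _))

/-- A subgroup of a free group all of whose elements commute is cyclic. -/
lemma aux_cyclic {G : Type*} [Group G] [IsFreeGroup G] (H : Subgroup G)
    (hab : ∀ u ∈ H, ∀ v ∈ H, Commute u v) :
    ∃ z ∈ H, ∀ h ∈ H, ∃ m : ℤ, h = z ^ m := by
  classical
  let e := IsFreeGroup.toFreeGroup H
  have hT : Subsingleton (IsFreeGroup.Generators ↥H) := by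
    by_contra h
    rw [not_subsingleton_iff_nontrivial] at h
    obtain ⟨t₁, t₂, hne⟩ := exists_pair_ne (IsFreeGroup.Generators ↥H)
    set σ : Equiv.Perm (Fin 4) := Equiv.swap 0 1 * Equiv.swap 1 2 with hσ
    set τ : Equiv.Perm (Fin 4) := Equiv.swap 1 2 * Equiv.swap 2 3 with hτ
    set f : IsFreeGroup.Generators ↥H → Equiv.Perm (Fin 4) :=
      fun t => if t = t₁ then σ else τ with hf
    have hc : Commute (FreeGroup.of t₁) (FreeGroup.of t₂) := by
      have h1 := hab ↑(e.symm (FreeGroup.of t₁)) (e.symm (FreeGroup.of t₁)).2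
        ↑(e.symm (FreeGroup.of t₂)) (e.symm (FreeGroup.of t₂)).2
      have h2 : Commute (e.symm (FreeGroup.of t₁)) (e.symm (FreeGroup.of t₂)) :=
        Subtype.ext h1.eq
      have := congrArg e h2.eq
      rw [_root_.map_mul, _root_.map_mul, e.apply_symm_apply, e.apply_symm_apply] at this
      exact this
    have hmap := hc.map (FreeGroup.lift f)
    rw [FreeGroup.lift_apply_of, FreeGroup.lift_apply_of, hf] at hmap
    simp only [if_pos rfl, if_neg hne.symm] at hmap
    revert hmap
    rw [Commute, SemiconjBy, hσ, hτ]
    decide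
  rcases isEmpty_or_nonempty (IsFreeGroup.Generators ↥H) with hE | hE
  · refine ⟨1, one_mem _, fun h hh => ⟨0, ?_⟩⟩
    have h1 : (e ⟨h, hh⟩).toWord = [] := by
      cases h' : (e ⟨h, hh⟩).toWord with
      | nil => rfl
      | cons p l => exact (hE.false p.1).elim
    have := e.injective ((toWord_eq_nil_iff.mp h1).trans (_root_.map_one e).symm)
    have := congrArg Subtype.val this
    simpa using this
  · obtain ⟨t⟩ := hE
    refine ⟨↑(e.symm (FreeGroup.of t)), (e.symm (FreeGroup.of t)).2, fun h hh => ?_⟩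
    obtain ⟨m, hm⟩ := aux_pow_subsingleton t (e ⟨h, hh⟩)
    refine ⟨m, ?_⟩
    have : (⟨h, hh⟩ : H) = e.symm (FreeGroup.of t) ^ m := by
      apply e.injective
      rw [map_zpow, e.apply_symm_apply, hm]
    have h2 := congrArg Subtype.val this
    simp only [SubgroupClass.coe_zpow] at h2
    exact h2

lemma aux_conj {X : Type} [Fintype X] [DecidableEq X] (hX : 2 ≤ Fintype.card X)
    (a b : FreeGroup X) (ha : a ≠ 1) (hb : b ≠ 1) :
    ∃ g : FreeGroup X, g.norm ≤ 1 ∧ ¬ Commute a (g * b * g⁻¹) := by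
  by_contra hcon
  push_neg at hcon
  obtain ⟨x, y, hxy⟩ := Fintype.exists_pair_of_one_lt_card hX
  have h1 : Commute a b := by
    have := hcon 1 (by simp)
    simpa using this
  have hx : Commute a (FreeGroup.of x * b * (FreeGroup.of x)⁻¹) :=
    hcon (FreeGroup.of x) (le_of_eq (norm_of x))
  have hy : Commute a (FreeGroup.of y * b * (FreeGroup.of y)⁻¹) :=
    hcon (FreeGroup.of y) (le_of_eq (norm_of y))
  set Z := Subgroup.centralizer ({b} : Set (FreeGroup X)) with hZ
  have hmemZ : ∀ u, u ∈ Z ↔ Commute b u := by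
    intro u
    rw [hZ, Subgroup.mem_centralizer_iff]
    constructor
    · intro h; exact h b (by simp)
    · intro h c hc; rw [Set.mem_singleton_iff] at hc; rw [hc]; exact h.eq
  have hZab : ∀ u ∈ Z, ∀ v ∈ Z, Commute u v := by
    intro u hu v hv
    exact aux_comm_trans hb ((hmemZ u).mp hu) ((hmemZ v).mp hv)
  have hbZ : b ∈ Z := (hmemZ b).mpr (Commute.refl b)
  have hbx : Commute b (FreeGroup.of x * b * (FreeGroup.of x)⁻¹) := aux_comm_trans ha h1 hx
  have hby : Commute b (FreeGroup.of y * b * (FreeGroup.of y)⁻¹) := aux_comm_trans ha h1 hy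
  have hconj_ne : ∀ (s w : FreeGroup X), w ≠ 1 → s * w * s⁻¹ ≠ 1 := by
    intro s w hw h
    apply hw
    have := congrArg (fun t => s⁻¹ * t * s) h
    simpa [mul_assoc] using this
  have hcommconj : ∀ (s u v : FreeGroup X), Commute u v → Commute (s*u*s⁻¹) (s*v*s⁻¹) := by
    intro s u v h
    have := h.map (MulAut.conj s).toMonoidHom
    simpa [MulAut.conj_apply] using this
  have hconjZ : ∀ (s : FreeGroup X), Commute b (s * b * s⁻¹) → ∀ g ∈ Z, s * g * s⁻¹ ∈ Z := by
    intro s hsb g hg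
    have hbg : Commute b g := (hmemZ g).mp hg
    have h2 : Commute (s*b*s⁻¹) (s*g*s⁻¹) := hcommconj s b g hbg
    rw [hmemZ]
    exact aux_comm_trans (hconj_ne s b hb) hsb.symm h2
  -- commuting with inverse conjugates as well
  have hbx' : Commute b ((FreeGroup.of x)⁻¹ * b * ((FreeGroup.of x)⁻¹)⁻¹) := by
    have h2 := hcommconj (FreeGroup.of x)⁻¹ _ _ hbx
    have h3 : (FreeGroup.of x)⁻¹ * (FreeGroup.of x * b * (FreeGroup.of x)⁻¹) * ((FreeGroup.of x)⁻¹)⁻¹ = b := by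
      group
    rw [h3] at h2
    exact h2.symm
  have hby' : Commute b ((FreeGroup.of y)⁻¹ * b * ((FreeGroup.of y)⁻¹)⁻¹) := by
    have h2 := hcommconj (FreeGroup.of y)⁻¹ _ _ hby
    have h3 : (FreeGroup.of y)⁻¹ * (FreeGroup.of y * b * (FreeGroup.of y)⁻¹) * ((FreeGroup.of y)⁻¹)⁻¹ = b := by
      group
    rw [h3] at h2
    exact h2.symm
  obtain ⟨z, hzZ, hcyc⟩ := aux_cyclic Z hZab
  have hz1 : z ≠ 1 := by
    intro h
    obtain ⟨β, hβ⟩ := hcyc b hbZ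
    apply hb
    rw [hβ, h, one_zpow]
  -- no torsion in a free group
  have hnotfin : ¬ IsOfFinOrder z := by
    intro hfin
    have hsub : (Z : Set (FreeGroup X)) ⊆ (Subgroup.zpowers z : Set (FreeGroup X)) := by
      intro g hg
      obtain ⟨m, hm⟩ := hcyc g hg
      exact ⟨m, hm.symm⟩
    have hfinZ : (Z : Set (FreeGroup X)).Finite := hfin.finite_zpowers.subset hsub
    have : Finite ↥Z := hfinZ.to_subtype
    have hnontriv : Nontrivial ↥Z :=
      ⟨⟨⟨b, hbZ⟩, 1, fun h => hb (congrArg Subtype.val h)⟩⟩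
    have : Infinite ↥Z := aux_infinite
    exact absurd ‹Finite ↥Z› this.not_finite
  -- conjugation by a generator sends z to z^(±1)
  have hpm : ∀ (s : FreeGroup X), Commute b (s * b * s⁻¹) →
      Commute b (s⁻¹ * b * (s⁻¹)⁻¹) → s ^ 2 * z * (s ^ 2)⁻¹ = z := by
    intro s hs hs'
    obtain ⟨k, hk⟩ := hcyc _ (hconjZ s hs z hzZ)
    obtain ⟨l, hl⟩ := hcyc _ (hconjZ s⁻¹ hs' z hzZ)
    have hzkl : z = z ^ (k * l) := by
      calc z = s * (s⁻¹ * z * (s⁻¹)⁻¹) * s⁻¹ := by group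
      _ = s * z ^ l * s⁻¹ := by rw [← hl]
      _ = (s * z * s⁻¹) ^ l := by rw [conj_zpow]
      _ = (z ^ k) ^ l := by rw [hk]
      _ = z ^ (k * l) := by rw [← zpow_mul]
    have hkl : k * l = 1 := by
      by_contra hne1
      apply hnotfin
      have hz0 : z ^ (k * l - 1) = 1 := by
        rw [zpow_sub, zpow_one, ← hzkl, mul_inv_cancel]
      refine isOfFinOrder_iff_pow_eq_one.mpr ⟨(k * l - 1).natAbs, ?_, ?_⟩
      · omega
      · rcases Int.natAbs_eq (k * l - 1) with h' | h'
        · rw [← zpow_natCast, ← h', hz0]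
        · rw [← zpow_natCast, ← neg_neg ((k*l-1).natAbs : ℤ), ← h', zpow_neg, hz0, inv_one]
    have hkk : k * k = 1 := by
      rcases Int.isUnit_iff.mp (IsUnit.of_mul_eq_one l hkl) with h' | h' <;> rw [h'] <;> norm_num
    have h2 : s * z ^ k * s⁻¹ = z := by
      rw [← conj_zpow, hk, ← zpow_mul, hkk, zpow_one]
    have hstep : s ^ 2 * z * (s ^ 2)⁻¹ = s * (s * z * s⁻¹) * s⁻¹ := by
      rw [pow_two, mul_inv_rev]; simp [mul_assoc]
    rw [hstep, hk]
    exact h2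
  have hx2 : Commute (FreeGroup.of x ^ 2) z := by
    have h3 := hpm (FreeGroup.of x) hbx hbx'
    have := congrArg (fun t => t * FreeGroup.of x ^ 2) h3
    show FreeGroup.of x ^ 2 * z = z * FreeGroup.of x ^ 2
    simpa [mul_assoc] using this
  have hy2 : Commute (FreeGroup.of y ^ 2) z := by
    have h3 := hpm (FreeGroup.of y) hby hby'
    have := congrArg (fun t => t * FreeGroup.of y ^ 2) h3
    show FreeGroup.of y ^ 2 * z = z * FreeGroup.of y ^ 2
    simpa [mul_assoc] using this
  -- contradiction : squares of distinct generators do not commute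
  have hfinal : Commute (FreeGroup.of x ^ 2) (FreeGroup.of y ^ 2) :=
    aux_comm_trans hz1 hx2.symm hy2.symm
  set σ : Equiv.Perm (Fin 4) := Equiv.swap 0 1 * Equiv.swap 1 2 with hσ
  set τ : Equiv.Perm (Fin 4) := Equiv.swap 1 2 * Equiv.swap 2 3 with hτ
  set f : X → Equiv.Perm (Fin 4) := fun t => if t = x then σ else if t = y then τ else 1 with hf
  have hmap := hfinal.map (FreeGroup.lift f)
  rw [map_pow, map_pow, FreeGroup.lift_apply_of, FreeGroup.lift_apply_of, hf] at hmap
  simp only [if_pos rfl, if_neg hxy.symm, if_neg hxy] at hmap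
  revert hmap
  rw [Commute, SemiconjBy, hσ, hτ]
  decide

lemma aux_key {X : Type} [Fintype X] [DecidableEq X] (hX : 2 ≤ Fintype.card X) (d : ℕ)
    (hd : 1 ≤ d) :
    ∀ m : ℕ, 1 ≤ m → ∀ γ : Fin m → FreeGroup X, (∀ j, γ j ≠ 1) → (∀ j, (γ j).norm ≤ d) →
    ∃ δ : FreeGroup X, δ ≠ 1 ∧ (∀ j, δ ∈ Subgroup.normalClosure {γ j}) ∧
      δ.norm + 5 * d ≤ 6 * d * m ^ 2 := by
  intro m
  induction m using Nat.strong_induction_on with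
  | _ m IH =>
  intro hm γ hne hlen
  rcases eq_or_lt_of_le hm with h1 | h2
  · -- base case m = 1
    refine ⟨γ ⟨0, by omega⟩, hne _, fun j => ?_, ?_⟩
    · have hj : j = ⟨0, by omega⟩ := by
        apply Fin.ext
        omega
      rw [hj]
      exact Subgroup.subset_normalClosure rfl
    · have := hlen ⟨0, by omega⟩
      have hb : 6 * d * m ^ 2 = 6 * d := by rw [← h1]; ring
      omega
  · -- inductive step, m ≥ 2
    have hple : m / 2 ≤ m := Nat.div_le_self m 2
    set p := m / 2 with hp
    set q := m - p with hq
    have hp1 : 1 ≤ p := by omega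
    have hq1 : 1 ≤ q := by omega
    have hpm : p < m := by omega
    have hqm : q < m := by omega
    obtain ⟨δ₁, hδ₁ne, hδ₁mem, hδ₁norm⟩ :=
      IH p hpm hp1 (fun i => γ (Fin.castLE hple i)) (fun i => hne _) (fun i => hlen _)
    obtain ⟨δ₂, hδ₂ne, hδ₂mem, hδ₂norm⟩ :=
      IH q hqm hq1 (fun i => γ ⟨p + i.1, by omega⟩) (fun i => hne _) (fun i => hlen _)
    obtain ⟨g, hg, hgc⟩ := aux_conj hX δ₁ δ₂ hδ₁ne hδ₂ne
    set c := g * δ₂ * g⁻¹ with hc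
    refine ⟨δ₁ * c * δ₁⁻¹ * c⁻¹, ?_, ?_, ?_⟩
    · intro h
      apply hgc
      have h2 : δ₁ * c = c * δ₁ := by
        have := congrArg (fun t => t * (c * δ₁)) h
        simpa [mul_assoc] using this
      exact h2
    · intro j
      set N := Subgroup.normalClosure {γ j} with hN
      haveI hNn : N.Normal := Subgroup.normalClosure_normal
      by_cases hj : j.1 < p
      · have h1 : δ₁ ∈ N := by
          have h0 := hδ₁mem ⟨j.1, hj⟩
          have he : Fin.castLE hple (⟨j.1, hj⟩ : Fin p) = j := Fin.ext rfl
          rwa [he] at h0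
        have h3 : δ₁ * c * δ₁⁻¹ * c⁻¹ = δ₁ * (c * δ₁⁻¹ * c⁻¹) := by
          simp [mul_assoc]
        rw [h3]
        exact mul_mem h1 (hNn.conj_mem _ (inv_mem h1) c)
      · have h1 : δ₂ ∈ N := by
          have h0 := hδ₂mem ⟨j.1 - p, by omega⟩
          have he : (⟨p + (j.1 - p), by omega⟩ : Fin m) = j := by
            apply Fin.ext
            simp only []
            omega
          rwa [he] at h0
        have hcN : c ∈ N := hNn.conj_mem _ h1 g
        exact mul_mem (hNn.conj_mem _ hcN δ₁) (inv_mem hcN)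
    · have hnc : c.norm ≤ δ₂.norm + 2 := by
        calc c.norm ≤ (g * δ₂).norm + g⁻¹.norm := norm_mul_le _ _
        _ ≤ g.norm + δ₂.norm + g⁻¹.norm := by
            have := norm_mul_le g δ₂
            omega
        _ = g.norm + δ₂.norm + g.norm := by rw [norm_inv_eq]
        _ ≤ δ₂.norm + 2 := by omega
      have hnδ : (δ₁ * c * δ₁⁻¹ * c⁻¹).norm ≤ 2 * δ₁.norm + 2 * c.norm := by
        calc (δ₁ * c * δ₁⁻¹ * c⁻¹).norm ≤ (δ₁ * c * δ₁⁻¹).norm + c⁻¹.norm := norm_mul_le _ _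
        _ ≤ (δ₁ * c).norm + δ₁⁻¹.norm + c⁻¹.norm := by
            have := norm_mul_le (δ₁ * c) δ₁⁻¹
            omega
        _ ≤ δ₁.norm + c.norm + δ₁⁻¹.norm + c⁻¹.norm := by
            have := norm_mul_le δ₁ c
            omega
        _ = 2 * δ₁.norm + 2 * c.norm := by
            rw [norm_inv_eq, norm_inv_eq]
            ring
      have hqcase : q = p ∨ q = p + 1 := by omega
      have hkey : 12 * (d * p ^ 2) + 12 * (d * q ^ 2) + 4 + 5 * d ≤ 6 * d * m ^ 2 + 20 * d := by
        rcases hqcase with h' | h'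
        · rw [show m = 2 * p from by omega, h']
          nlinarith [hd]
        · rw [show m = 2 * p + 1 from by omega, h']
          nlinarith [hd, hp1]
      linarith [hδ₁norm, hδ₂norm, hnc, hnδ, hkey]
theorem stmt_4 (X : Type) [Fintype X] [DecidableEq X] (hX : 2 ≤ Fintype.card X)
    (n d : ℕ) (hn : 1 ≤ n) (γ : Fin n → FreeGroup X)
    (hne : ∀ j, γ j ≠ 1) (hlen : ∀ j, (γ j).norm ≤ d) :
    ∃ δ : FreeGroup X, δ ≠ 1 ∧
      (∀ j, δ ∈ Subgroup.normalClosure {γ j}) ∧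
      δ.norm ≤ 6 * d * n ^ 2 := by
  have hd : 1 ≤ d := by
    by_contra h
    have hd0 : d = 0 := by omega
    have := hlen ⟨0, by omega⟩
    have hz : (γ ⟨0, by omega⟩).norm = 0 := by omega
    exact hne _ (FreeGroup.norm_eq_zero.mp hz)
  obtain ⟨δ, h1, h2, h3⟩ := aux_key hX d hd n hn γ hne hlen
  exact ⟨δ, h1, h2, by omega⟩
end

section
/- Define $\mathrm{D}^{\lhd}_{F}(\gamma) = \min\{[F:\Delta] : \Delta \trianglelefteq F, [F:\Delta] < \infty, \gamma \notin \Delta\}$ for nontrivial $\gamma$ in a free group $F$ of rank $m \geq 2$ with basis $X$. Then for every $n \geq 1$ there exists a nontrivial $\delta \in F$ with $\|\delta\|_X \leq 6 n^3$ and $\mathrm{D}^{\lhd}_F(\delta) > n$. Consequently $n^{1/3} \preceq \mathrm{D}^{\lhd}_F(n) := \max\{\mathrm{D}^{\lhd}_F(\gamma) : 1 \neq \gamma, \|\gamma\|_X \leq n\}$, where $f \preceq g$ means $f(n) \leq C g(Cn)$ for some constant $C$ and all $n$. -/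
open FreeGroup List

namespace RFAux

variable {X : Type} [DecidableEq X]

/-- reduced words have no adjacent cancelling pair -/
lemma no_cancel (w : FreeGroup X) {i : ℕ} {c : X} {x : Bool}
    (h1 : w.toWord[i]? = some (c, x)) (h2 : w.toWord[i+1]? = some (c, !x)) : False := by
  set L := w.toWord with hL
  obtain ⟨hi1, e1⟩ := List.getElem?_eq_some_iff.mp h1
  obtain ⟨hi2, e2⟩ := List.getElem?_eq_some_iff.mp h2
  have hdecomp : L = L.take i ++ (c, x) :: (c, !x) :: L.drop (i + 2) := by
    conv_lhs => rw [← List.take_append_drop i L]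
    congr 1
    rw [List.drop_eq_getElem_cons hi1, e1, List.drop_eq_getElem_cons hi2, e2]
  exact FreeGroup.reduce.not ((w.reduce_toWord).trans hdecomp)

variable (L : List (X × Bool))

abbrev PP (c : X) (t : ℕ) : Prop :=
  (t < L.length ∧ L[L.length - 1 - t]? = some (c, true)) ∨
  (0 < t ∧ L[L.length - t]? = some (c, false))

abbrev QQ (c : X) (t : ℕ) : Prop :=
  (0 < t ∧ L[L.length - t]? = some (c, true)) ∨
  (t < L.length ∧ L[L.length - 1 - t]? = some (c, false))

def sf (c : X) (v : ℕ) : ℕ :=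
  if v < L.length ∧ L[L.length - 1 - v]? = some (c, true) then v + 1 else v - 1

def sg (c : X) (v : ℕ) : ℕ :=
  if 0 < v ∧ L[L.length - v]? = some (c, true) then v - 1
  else if v < L.length then v + 1 else v

lemma sf_lt {c : X} {v : ℕ} (hv : v < L.length + 1) : sf L c v < L.length + 1 := by
  unfold sf; split_ifs with h <;> omega

lemma sg_lt {c : X} {v : ℕ} (hv : v < L.length + 1) : sg L c v < L.length + 1 := by
  unfold sg; split_ifs with h h2 <;> omega

variable {L}
variable (hred : ∀ (i : ℕ) (c' : X) (x : Bool),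
    L[i]? = some (c', x) → L[i+1]? = some (c', !x) → False)

section
variable {c : X} {v : ℕ}

lemma hPQ (hv : v < L.length + 1) (h : PP L c v) : QQ L c (sf L c v) := by
  unfold sf
  split_ifs with h1
  · left
    refine ⟨by omega, ?_⟩
    have : L.length - (v + 1) = L.length - 1 - v := by omega
    rw [this]; exact h1.2
  · have h2 := h.resolve_left (by tauto)
    right
    refine ⟨by omega, ?_⟩
    have : L.length - 1 - (v - 1) = L.length - v := by omega
    rw [this]; exact h2.2

lemma hQP (hv : v < L.length + 1) (h : QQ L c v) : PP L c (sg L c v) := by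
  unfold sg
  split_ifs with h1 h2
  · left
    refine ⟨by omega, ?_⟩
    have : L.length - 1 - (v - 1) = L.length - v := by omega
    rw [this]; exact h1.2
  · have h3 := h.resolve_left (by tauto)
    right
    refine ⟨by omega, ?_⟩
    have : L.length - (v + 1) = L.length - 1 - v := by omega
    rw [this]; exact h3.2
  · have h3 := h.resolve_left (by tauto)
    omega

include hred in
lemma hGF (hv : v < L.length + 1) (h : PP L c v) : sg L c (sf L c v) = v := by
  unfold sf
  split_ifs with h1
  · unfold sg
    rw [if_pos]
    · omega
    · refine ⟨by omega, ?_⟩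
      have : L.length - (v + 1) = L.length - 1 - v := by omega
      rw [this]; exact h1.2
  · have h2 := h.resolve_left (by tauto)
    unfold sg
    rw [if_neg, if_pos (by omega)]
    · omega
    · rintro ⟨hp, hq⟩
      have hidx : L.length - (v - 1) = (L.length - v) + 1 := by omega
      rw [hidx] at hq
      exact hred _ _ _ h2.2 hq

include hred in
lemma hFG (hv : v < L.length + 1) (h : QQ L c v) : sf L c (sg L c v) = v := by
  unfold sg
  split_ifs with h1 h2
  · unfold sf
    rw [if_pos]
    · omega
    · refine ⟨by omega, ?_⟩
      have : L.length - 1 - (v - 1) = L.length - v := by omega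
      rw [this]; exact h1.2
  · have h3 := h.resolve_left (by tauto)
    unfold sf
    rw [if_neg]
    · omega
    · rintro ⟨hp, hq⟩
      have hidx : L.length - 1 - v = (L.length - 1 - (v + 1)) + 1 := by omega
      rw [hidx] at h3
      exact hred _ _ _ hq h3.2
  · have h3 := h.resolve_left (by tauto)
    omega

end

variable (L) in
def eqv (c : X) :
    {t : Fin (L.length + 1) // PP L c t.val} ≃ {t : Fin (L.length + 1) // QQ L c t.val} where
  toFun t := ⟨⟨sf L c t.val.val, sf_lt L t.val.isLt⟩, hPQ t.val.isLt t.2⟩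
  invFun t := ⟨⟨sg L c t.val.val, sg_lt L t.val.isLt⟩, hQP t.val.isLt t.2⟩
  left_inv t := Subtype.ext (Fin.ext (hGF hred t.val.isLt t.2))
  right_inv t := Subtype.ext (Fin.ext (hFG hred t.val.isLt t.2))

variable (L) in
noncomputable def sigma (c : X) : Equiv.Perm (Fin (L.length + 1)) :=
  (eqv L hred c).extendSubtype

lemma sigma_at_true {c : X} {i j : ℕ} (hij : i + (j + 1) = L.length)
    (hc : L[i]? = some (c, true)) :
    sigma L hred c ⟨j, by omega⟩ = ⟨j + 1, by omega⟩ := by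
  have hidx : L.length - 1 - j = i := by omega
  have hP : PP L c j := Or.inl ⟨by omega, by rw [hidx]; exact hc⟩
  rw [sigma, Equiv.extendSubtype_apply_of_mem (eqv L hred c) _ hP]
  apply Fin.ext
  show sf L c j = j + 1
  unfold sf
  rw [if_pos ⟨by omega, by rw [hidx]; exact hc⟩]

lemma sigma_at_false {c : X} {i j : ℕ} (hij : i + (j + 1) = L.length)
    (hc : L[i]? = some (c, false)) :
    sigma L hred c ⟨j + 1, by omega⟩ = ⟨j, by omega⟩ := by
  have hidx : L.length - (j + 1) = i := by omega
  have hP : PP L c (j + 1) := Or.inr ⟨by omega, by rw [hidx]; exact hc⟩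
  rw [sigma, Equiv.extendSubtype_apply_of_mem (eqv L hred c) _ hP]
  apply Fin.ext
  show sf L c (j + 1) = j
  unfold sf
  rw [if_neg]
  · omega
  · rintro ⟨hp, hq⟩
    have hi1 : 1 ≤ i := by omega
    have hidx2 : L.length - 1 - (j + 1) = i - 1 := by omega
    rw [hidx2] at hq
    exact hred (i - 1) c true hq (by rw [show (i - 1) + 1 = i by omega]; exact hc)

lemma prod_drop : ∀ (j i : ℕ) (_ : i + j = L.length),
    (((L.drop i).map (fun p => cond p.2 (sigma L hred p.1) (sigma L hred p.1)⁻¹)).prod)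
      ⟨0, by omega⟩ = ⟨j, by omega⟩ := by
  intro j
  induction j with
  | zero =>
    intro i hi
    rw [List.drop_eq_nil_of_le (by omega)]
    simp
  | succ j ih =>
    intro i hi
    rw [List.drop_eq_getElem_cons (by omega), List.map_cons, List.prod_cons]
    rw [Equiv.Perm.mul_apply, ih (i + 1) (by omega)]
    have hLi : L[i]? = some L[i] := List.getElem?_eq_getElem (by omega)
    rcases hp : L[i] with ⟨c, x⟩
    rw [hp] at hLi
    cases x
    · show (sigma L hred c)⁻¹ _ = _
      have hs := sigma_at_false hred (by omega : i + (j + 1) = L.length) hLi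
      show (sigma L hred c).symm _ = _
      rw [Equiv.symm_apply_eq]
      exact hs.symm
    · exact sigma_at_true hred (by omega : i + (j + 1) = L.length) hLi

theorem exists_normal_excluding (w : FreeGroup X) (hw : w ≠ 1) :
    ∃ Δ : Subgroup (FreeGroup X), Δ.Normal ∧ Δ.FiniteIndex ∧ w ∉ Δ := by
  classical
  set L := w.toWord with hL
  have hred : ∀ (i : ℕ) (c' : X) (x : Bool),
      L[i]? = some (c', x) → L[i+1]? = some (c', !x) → False := fun i c' x h1 h2 =>
    no_cancel w h1 h2
  set φ : FreeGroup X →* Equiv.Perm (Fin (L.length + 1)) :=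
    FreeGroup.lift (fun c => sigma L hred c) with hφ
  have hlen : 0 < L.length := by
    rcases Nat.eq_zero_or_pos L.length with h | h
    · exact absurd (by rwa [← toWord_eq_nil_iff, ← hL, ← List.length_eq_zero_iff]) hw
    · exact h
  have key : φ w ⟨0, by omega⟩ = ⟨L.length, by omega⟩ := by
    rw [show φ w = φ (FreeGroup.mk L) from congrArg φ (FreeGroup.mk_toWord (x := w)).symm]
    rw [hφ, FreeGroup.lift_mk]
    have := prod_drop hred L.length 0 (by omega)
    simpa using this
  have hφw : φ w ≠ 1 := by
    intro h
    rw [h] at key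
    simp only [Equiv.Perm.one_apply, Fin.mk.injEq] at key
    omega
  refine ⟨φ.ker, MonoidHom.normal_ker φ, ?_, ?_⟩
  · constructor
    rw [Subgroup.index_ker]
    have : Nonempty φ.range := ⟨1, 1, map_one φ⟩
    exact Nat.card_pos.ne'
  · simpa [MonoidHom.mem_ker] using hφw

end RFAux

namespace WordAux

set_option linter.unusedSectionVars false

variable {X : Type} [DecidableEq X]

/-- non-cancelling adjacency -/
def Rel : X × Bool → X × Bool → Prop := fun p q => p.1 ≠ q.1 ∨ p.2 = q.2

lemma no_step {l m : List (X × Bool)} (h : List.Chain' Rel l) (st : Red.Step l m) : False := by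
  cases st with
  | @not L1 L2 x e =>
    have h2 := (List.isChain_append.mp h).2.1
    have h3 := (List.isChain_cons_cons.mp h2).1
    rcases h3 with h3 | h3
    · exact h3 rfl
    · simp at h3

lemma reduce_eq_self {l : List (X × Bool)} (h : List.Chain' Rel l) :
    FreeGroup.reduce l = l := by
  have hr : Red l (FreeGroup.reduce l) := FreeGroup.reduce.red
  rcases Relation.ReflTransGen.cases_head hr with h1 | ⟨mid, hstep, _⟩
  · exact h1.symm
  · exact absurd hstep (fun st => no_step h st)

variable (b : X)

/-- `Good l` : reduced, starts with `b`, ends with `b⁻¹`. -/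
def Good (l : List (X × Bool)) : Prop :=
  List.Chain' Rel l ∧ l.head? = some (b, true) ∧ l.getLast? = some (b, false)

variable {b}

lemma last_cons_concat {x y : X × Bool} {l : List (X × Bool)} :
    (x :: (l ++ [y])).getLast? = some y := by
  rw [← List.cons_append, List.getLast?_concat]

lemma good_invRev {l : List (X × Bool)} (h : Good b l) : Good b (invRev l) := by
  obtain ⟨hc, hh, hl⟩ := h
  refine ⟨?_, ?_, ?_⟩
  · rw [invRev, List.Chain', List.isChain_reverse]
    refine (List.isChain_map _).mpr (hc.imp ?_)
    rintro ⟨c1, e1⟩ ⟨c2, e2⟩ hpq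
    rcases hpq with h1 | h1
    · exact Or.inl (fun e => h1 e.symm)
    · simp only [Rel] at h1 ⊢
      right
      simp [h1]
  · rw [invRev, List.head?_reverse, List.getLast?_map, hl]
    rfl
  · rw [invRev, List.getLast?_reverse, List.head?_map, hh]
    rfl

lemma good_append {a : X} (hab : a ≠ b) {l1 l2 : List (X × Bool)} (h1 : Good b l1)
    (h2 : Good b l2) (e : Bool) : Good b (l1 ++ (a, e) :: l2) := by
  obtain ⟨c1, hh1, hl1⟩ := h1
  obtain ⟨c2, hh2, hl2⟩ := h2
  refine ⟨?_, ?_, ?_⟩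
  · rw [List.Chain', List.isChain_append]
    refine ⟨c1, ?_, ?_⟩
    · rw [List.isChain_cons]
      refine ⟨fun y hy => ?_, c2⟩
      rw [hh2] at hy; cases hy
      exact Or.inl hab
    · intro x hx y hy
      rw [hl1] at hx; cases hx
      simp only [List.head?_cons, Option.mem_def, Option.some.injEq] at hy
      subst hy
      exact Or.inl (fun e => hab e.symm)
  · cases l1 with
    | nil => simp at hh1
    | cons p t => simpa using hh1
  · rw [List.getLast?_append_cons]
    cases l2 with
    | nil => simp at hl2
    | cons p t => rw [List.getLast?_cons_cons]; exact hl2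

lemma good_wrap {a : X} (hab : a ≠ b) {l : List (X × Bool)} (h : Good b l) :
    Good b ((b, true) :: (l ++ [(a, false), (b, false)])) := by
  obtain ⟨hc, hh, hl⟩ := h
  refine ⟨?_, rfl, ?_⟩
  · rw [List.Chain', List.isChain_cons]
    constructor
    · intro y hy
      cases l with
      | nil => simp at hh
      | cons p t =>
        simp only [List.cons_append, List.head?_cons, Option.mem_def, Option.some.injEq] at hy hh
        subst hy; subst hh
        exact Or.inr rfl
    · rw [List.isChain_append]
      refine ⟨hc, ?_, ?_⟩
      · refine List.isChain_cons_cons.mpr ⟨Or.inl hab, ?_⟩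
        simp
      · intro x hx y hy
        rw [hl] at hx; cases hx
        simp only [List.head?_cons, Option.mem_def, Option.some.injEq] at hy
        subst hy
        exact Or.inl (fun e => hab e.symm)
  · rw [show l ++ [(a, false), (b, false)] = (l ++ [(a, false)]) ++ [(b, false)] by simp]
    exact last_cons_concat

lemma good_leaf {a : X} (hab : a ≠ b) (m : ℕ) :
    Good b ((b, true) :: (List.replicate (m + 1) (a, true) ++ [(b, false)])) := by
  refine ⟨?_, rfl, last_cons_concat⟩
  rw [List.Chain', List.isChain_cons]
  constructor
  · intro y hy
    rw [List.replicate_succ] at hy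
    simp only [List.cons_append, List.head?_cons, Option.mem_def, Option.some.injEq] at hy
    subst hy
    exact Or.inl (fun e => hab e.symm)
  · rw [List.isChain_append]
    refine ⟨List.isChain_replicate_of_rel _ (Or.inr rfl), List.isChain_singleton _, ?_⟩
    intro x hx y hy
    rw [List.replicate_succ', List.getLast?_concat] at hx
    cases hx
    simp only [List.head?_cons, Option.mem_def, Option.some.injEq] at hy
    subst hy
    exact Or.inl hab

variable (a b : X)

/-- the nested-commutator word -/
def Wd : ℕ → ℕ → List (X × Bool)
  | 0, lo => (b, true) :: (List.replicate (lo + 1) (a, true) ++ [(b, false)])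
  | s + 1, lo =>
    (b, true) :: ((Wd s lo ++ (a, true) :: (Wd s (lo + 2 ^ s) ++ (a, false) ::
      (invRev (Wd s lo) ++ (a, true) :: invRev (Wd s (lo + 2 ^ s))))) ++
        [(a, false), (b, false)])

variable {a b}

lemma good_Wd (hab : a ≠ b) (s lo : ℕ) : Good b (Wd a b s lo) := by
  induction s generalizing lo with
  | zero => exact good_leaf hab lo
  | succ s ih =>
    refine good_wrap hab ?_
    exact good_append hab (ih lo) (good_append hab (ih (lo + 2 ^ s))
      (good_append hab (good_invRev (ih lo)) (good_invRev (ih (lo + 2 ^ s))) true) false) true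

lemma len_Wd (s lo : ℕ) :
    2 * (Wd a b s lo).length + 4 ≤ 2 * 4 ^ s * (lo + 3) + 8 ^ s + 4 * 4 ^ s := by
  induction s generalizing lo with
  | zero =>
    simp [Wd]
  | succ s ih =>
    have ihA := ih lo
    have ihB := ih (lo + 2 ^ s)
    have hlen : (Wd a b (s + 1) lo).length =
        2 * (Wd a b s lo).length + 2 * (Wd a b s (lo + 2 ^ s)).length + 6 := by
      simp [Wd, invRev_length]
      ring
    have h48 : (4 : ℕ) ^ s * 2 ^ s = 8 ^ s := by
      rw [← Nat.mul_pow]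
    have e4 : (4 : ℕ) ^ (s + 1) = 4 * 4 ^ s := by ring
    have e8 : (8 : ℕ) ^ (s + 1) = 8 * 8 ^ s := by ring
    rw [hlen, e4, e8]
    nlinarith [ihA, ihB, h48]

lemma mk_Wd_succ (s lo : ℕ) :
    FreeGroup.mk (Wd a b (s + 1) lo) =
      of b * FreeGroup.mk (Wd a b s lo) * of a * FreeGroup.mk (Wd a b s (lo + 2 ^ s)) *
        (of a)⁻¹ * (FreeGroup.mk (Wd a b s lo))⁻¹ * of a *
        (FreeGroup.mk (Wd a b s (lo + 2 ^ s)))⁻¹ * (of a)⁻¹ * (of b)⁻¹ := by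
  have hof : ∀ c : X, (of c : FreeGroup X) = FreeGroup.mk [(c, true)] := fun _ => rfl
  have hofinv : ∀ c : X, ((of c)⁻¹ : FreeGroup X) = FreeGroup.mk [(c, false)] := by
    intro c
    rw [hof, inv_mk]
    rfl
  rw [hofinv a, hofinv b, hof a, hof b, inv_mk, inv_mk]
  simp only [mul_mk]
  apply congrArg
  simp [Wd]

lemma mk_Wd_zero (lo : ℕ) :
    FreeGroup.mk (Wd a b 0 lo) = of b * (of a) ^ (lo + 1) * (of b)⁻¹ := by
  have hof : ∀ c : X, (of c : FreeGroup X) = FreeGroup.mk [(c, true)] := fun _ => rfl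
  have hofinv : ((of b)⁻¹ : FreeGroup X) = FreeGroup.mk [(b, false)] := by
    rw [hof, inv_mk]; rfl
  have hpow : (of a : FreeGroup X) ^ (lo + 1) =
      FreeGroup.mk (List.replicate (lo + 1) (a, true)) := by
    rw [← FreeGroup.mk_toWord (x := of a ^ (lo + 1)), FreeGroup.toWord_of_pow]
  rw [hpow, hofinv, hof]
  simp only [mul_mk]
  apply congrArg
  simp [Wd]

lemma mem_Wd (s lo t : ℕ) (h1 : 1 ≤ t) (h2 : t ≤ 2 ^ s) :
    FreeGroup.mk (Wd a b s lo) ∈ Subgroup.normalClosure {(of a : FreeGroup X) ^ (lo + t)} := by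
  induction s generalizing lo t with
  | zero =>
    have ht : t = 1 := by simp at h2; omega
    subst ht
    rw [mk_Wd_zero]
    haveI : (Subgroup.normalClosure {(of a : FreeGroup X) ^ (lo + 1)}).Normal :=
      Subgroup.normalClosure_normal
    exact Subgroup.Normal.conj_mem this _
      (Subgroup.subset_normalClosure (by simp)) (of b)
  | succ s ih =>
    set N := Subgroup.normalClosure {(of a : FreeGroup X) ^ (lo + t)} with hN
    haveI hNn : N.Normal := Subgroup.normalClosure_normal
    set MA := FreeGroup.mk (Wd a b s lo) with hMA
    set MB := FreeGroup.mk (Wd a b s (lo + 2 ^ s)) with hMB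
    rw [mk_Wd_succ]
    by_cases hts : t ≤ 2 ^ s
    · have hA : MA ∈ N := ih lo t h1 hts
      have key : of b * MA * of a * MB * (of a)⁻¹ * MA⁻¹ * of a * MB⁻¹ * (of a)⁻¹ * (of b)⁻¹ =
          of b * (MA * ((of a * MB * (of a)⁻¹) * MA⁻¹ * (of a * MB * (of a)⁻¹)⁻¹)) * (of b)⁻¹ := by
        group
      rw [key]
      exact hNn.conj_mem _ (mul_mem hA (hNn.conj_mem _ (inv_mem hA) _)) _
    · have ht' : 1 ≤ t - 2 ^ s := by omega
      have ht'' : t - 2 ^ s ≤ 2 ^ s := by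
        have := Nat.pow_succ 2 s ▸ h2
        omega
      have hB0 : MB ∈ Subgroup.normalClosure {(of a : FreeGroup X) ^ (lo + 2 ^ s + (t - 2 ^ s))} :=
        ih (lo + 2 ^ s) (t - 2 ^ s) ht' ht''
      have heq : lo + 2 ^ s + (t - 2 ^ s) = lo + t := by omega
      rw [heq] at hB0
      have hB : MB ∈ N := hB0
      have key : of b * MA * of a * MB * (of a)⁻¹ * MA⁻¹ * of a * MB⁻¹ * (of a)⁻¹ * (of b)⁻¹ =
          of b * ((MA * (of a * MB * (of a)⁻¹) * MA⁻¹) * (of a * MB⁻¹ * (of a)⁻¹)) * (of b)⁻¹ := by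
        group
      rw [key]
      refine hNn.conj_mem _ (mul_mem ?_ ?_) _
      · exact hNn.conj_mem _ (hNn.conj_mem _ hB _) _
      · exact hNn.conj_mem _ (inv_mem hB) _

lemma Wd_ne_one (hab : a ≠ b) (s lo : ℕ) : FreeGroup.mk (Wd a b s lo) ≠ 1 := by
  have hg := good_Wd hab s lo
  intro h
  have h2 : (FreeGroup.mk (Wd a b s lo)).toWord = Wd a b s lo := by
    rw [FreeGroup.toWord_mk, reduce_eq_self hg.1]
  rw [h] at h2
  have := hg.2.1
  rw [← h2] at this
  simp at this

lemma norm_Wd_le (s lo : ℕ) :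
    2 * (FreeGroup.mk (Wd a b s lo)).norm + 4 ≤ 2 * 4 ^ s * (lo + 3) + 8 ^ s + 4 * 4 ^ s := by
  have h1 := FreeGroup.norm_mk_le (L₁ := Wd a b s lo)
  have h2 := len_Wd (a := a) (b := b) s lo
  omega

end WordAux


/-- The minimal index of a finite-index normal subgroup of `F` excluding `γ`. -/
noncomputable def normalDiv {F : Type*} [Group F] (γ : F) : ℕ :=
  sInf {k | ∃ Δ : Subgroup F, Δ.Normal ∧ Δ.FiniteIndex ∧ γ ∉ Δ ∧ Δ.index = k}

/-- The maximum of `normalDiv` over nontrivial elements of word length at most `n`. -/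
noncomputable def normalDivMax (X : Type) [DecidableEq X] (n : ℕ) : ℕ :=
  sSup {k | ∃ γ : FreeGroup X, γ ≠ 1 ∧ γ.norm ≤ n ∧ normalDiv γ = k}

section Assembly

open FreeGroup

variable {X : Type} [DecidableEq X]

lemma main_part1 {a b : X} (hab : a ≠ b) (n : ℕ) (hn : 1 ≤ n) :
    ∃ δ : FreeGroup X, δ ≠ 1 ∧ δ.norm ≤ 6 * n ^ 3 ∧ n < normalDiv δ := by
  set s := Nat.clog 2 n with hs
  have hn2 : n ≤ 2 ^ s := Nat.le_pow_clog (by norm_num) n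
  set δ := FreeGroup.mk (WordAux.Wd a b s 0) with hδ
  have hδ1 : δ ≠ 1 := WordAux.Wd_ne_one hab s 0
  have hnorm2 : 2 * δ.norm + 4 ≤ 2 * 4 ^ s * (0 + 3) + 8 ^ s + 4 * 4 ^ s :=
    WordAux.norm_Wd_le s 0
  have hnorm : δ.norm ≤ 6 * n ^ 3 := by
    rcases eq_or_lt_of_le hn with h1 | h1
    · have hs0 : s = 0 := by rw [hs, ← h1, Nat.clog_one_right]
      rw [hs0] at hnorm2
      simp only [pow_zero] at hnorm2
      have hn3 : 1 ≤ n ^ 3 := Nat.one_le_pow _ _ (by omega)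
      omega
    · have hs1 : 0 < s := Nat.clog_pos (by norm_num) h1
      have h2s : 2 ^ (s - 1) < n := Nat.pow_pred_clog_lt_self (by norm_num) h1
      have hm : 2 ^ s ≤ 2 * (n - 1) := by
        have hss : s - 1 + 1 = s := by omega
        have h2 : 2 ^ (s - 1 + 1) = 2 ^ (s - 1) * 2 := pow_succ 2 (s - 1)
        rw [hss] at h2
        omega
      have h4 : (4 : ℕ) ^ s = (2 ^ s) ^ 2 := by
        rw [show (4 : ℕ) = 2 ^ 2 by norm_num, ← pow_mul, ← pow_mul, Nat.mul_comm]
      have h8 : (8 : ℕ) ^ s = (2 ^ s) ^ 3 := by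
        rw [show (8 : ℕ) = 2 ^ 3 by norm_num, ← pow_mul, ← pow_mul, Nat.mul_comm]
      rw [h4, h8] at hnorm2
      set m := 2 ^ s with hmdef
      set q := n - 1 with hq
      have hq1 : 1 ≤ q := by omega
      have hnq : n = q + 1 := by omega
      have hmq : m ≤ 2 * q := hm
      have hkey : 2 * δ.norm + 4 ≤ 10 * m ^ 2 + m ^ 3 := by
        have : 2 * 4 ^ s * (0 + 3) = 6 * 4 ^ s := by ring
        nlinarith [hnorm2]
      have hbound : 10 * m ^ 2 + m ^ 3 ≤ 12 * (q + 1) ^ 3 + 4 := by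
        have e1 : m ^ 2 ≤ (2 * q) ^ 2 := Nat.pow_le_pow_left hmq 2
        have e2 : m ^ 3 ≤ (2 * q) ^ 3 := Nat.pow_le_pow_left hmq 3
        have e3 : q ^ 2 ≤ q ^ 3 := Nat.pow_le_pow_right (by omega) (by omega)
        nlinarith [e1, e2, e3]
      rw [hnq]
      nlinarith [hkey, hbound]
  have hmem : ∀ j, 1 ≤ j → j ≤ n →
      δ ∈ Subgroup.normalClosure {(of a : FreeGroup X) ^ j} := by
    intro j hj1 hjn
    have := WordAux.mem_Wd (a := a) (b := b) s 0 j hj1 (le_trans hjn hn2)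
    simpa using this
  obtain ⟨Δ₀, hΔ₀n, hΔ₀f, hΔ₀mem⟩ := RFAux.exists_normal_excluding δ hδ1
  have hSne : {k | ∃ Δ : Subgroup (FreeGroup X),
      Δ.Normal ∧ Δ.FiniteIndex ∧ δ ∉ Δ ∧ Δ.index = k}.Nonempty :=
    ⟨Δ₀.index, Δ₀, hΔ₀n, hΔ₀f, hΔ₀mem, rfl⟩
  have hall : ∀ k ∈ {k | ∃ Δ : Subgroup (FreeGroup X),
      Δ.Normal ∧ Δ.FiniteIndex ∧ δ ∉ Δ ∧ Δ.index = k}, n < k := by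
    rintro k ⟨Δ, hΔn, hΔf, hδΔ, rfl⟩
    by_contra hle
    push_neg at hle
    haveI := hΔn
    haveI := hΔf
    set g : FreeGroup X ⧸ Δ := QuotientGroup.mk' Δ (of a) with hg
    have hj0 : 0 < orderOf g := orderOf_pos g
    have hdvd : orderOf g ∣ Δ.index := by
      rw [Subgroup.index_eq_card]
      exact orderOf_dvd_natCard g
    have hidx0 : Δ.index ≠ 0 := hΔf.index_ne_zero
    have hjn : orderOf g ≤ n := le_trans (Nat.le_of_dvd (by omega) hdvd) hle
    have hpow : (of a : FreeGroup X) ^ orderOf g ∈ Δ := by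
      have h1 : g ^ orderOf g = 1 := pow_orderOf_eq_one g
      rw [hg, ← map_pow] at h1
      have h2 : (of a : FreeGroup X) ^ orderOf g ∈ (QuotientGroup.mk' Δ).ker :=
        MonoidHom.mem_ker.mpr h1
      rwa [QuotientGroup.ker_mk'] at h2
    have hsub : Subgroup.normalClosure {(of a : FreeGroup X) ^ orderOf g} ≤ Δ :=
      Subgroup.normalClosure_le_normal (by simpa using hpow)
    exact hδΔ (hsub (hmem (orderOf g) hj0 hjn))
  refine ⟨δ, hδ1, hnorm, ?_⟩
  exact hall _ (Nat.sInf_mem hSne)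

end Assembly

theorem stmt_9 (X : Type) [Fintype X] [DecidableEq X] (hX : 2 ≤ Fintype.card X) :
    (∀ n : ℕ, 1 ≤ n → ∃ δ : FreeGroup X, δ ≠ 1 ∧ δ.norm ≤ 6 * n ^ 3 ∧
      n < normalDiv δ) ∧
    ∃ C : ℕ, 0 < C ∧ ∀ n : ℕ,
      (n : ℝ) ^ ((1 : ℝ) / 3) ≤ C * normalDivMax X (C * n) := by
  obtain ⟨a, b, hab⟩ := Fintype.exists_pair_of_one_lt_card (by omega : 1 < Fintype.card X)
  refine ⟨fun n hn => main_part1 hab n hn, 48, by norm_num, ?_⟩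
  intro n
  rcases Nat.eq_zero_or_pos n with rfl | hn
  · rw [Nat.cast_zero, Real.zero_rpow (by norm_num : (1 : ℝ) / 3 ≠ 0)]
    positivity
  · set t : ℝ := (n : ℝ) ^ ((1 : ℝ) / 3) with ht
    have hn1 : (1 : ℝ) ≤ (n : ℝ) := by exact_mod_cast hn
    have ht1 : 1 ≤ t := by
      have h := Real.rpow_le_rpow (x := (1 : ℝ)) (y := (n : ℝ)) (z := (1 : ℝ) / 3)
        (by norm_num) hn1 (by norm_num)
      rwa [Real.one_rpow] at h
    have ht0 : 0 < t := by linarith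
    set m := ⌈t⌉₊ with hmdef
    have hm1 : 1 ≤ m := Nat.one_le_iff_ne_zero.mpr (by
      have := Nat.ceil_pos.mpr ht0
      omega)
    have ht3 : t ^ (3 : ℕ) = (n : ℝ) := by
      rw [ht, ← Real.rpow_natCast ((n : ℝ) ^ ((1 : ℝ) / 3)) 3,
        ← Real.rpow_mul (by positivity)]
      norm_num
    have hm8 : m ^ 3 ≤ 8 * n := by
      have hmr : (m : ℝ) ≤ 2 * t := by
        have h1 := Nat.ceil_lt_add_one (le_of_lt ht0)
        linarith
      have h2 : (m : ℝ) ^ (3 : ℕ) ≤ 8 * t ^ (3 : ℕ) := by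
        have hm0 : (0 : ℝ) ≤ (m : ℝ) := Nat.cast_nonneg m
        have h3 : (m : ℝ) ^ (3 : ℕ) ≤ (2 * t) ^ (3 : ℕ) := pow_le_pow_left₀ hm0 hmr 3
        have h4 : (2 * t) ^ (3 : ℕ) = 8 * t ^ (3 : ℕ) := by ring
        linarith
      rw [ht3] at h2
      exact_mod_cast h2
    obtain ⟨δ, hδ1, hδnorm, hδdiv⟩ := main_part1 hab m hm1
    have hδnorm' : δ.norm ≤ 48 * n := by
      have : 6 * m ^ 3 ≤ 48 * n := by omega
      omega
    have hbdd : BddAbove {k | ∃ γ : FreeGroup X, γ ≠ 1 ∧ γ.norm ≤ 48 * n ∧ normalDiv γ = k} := by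
      have hfin : {γ : FreeGroup X | γ.norm ≤ 48 * n}.Finite := by
        have hsub : {γ : FreeGroup X | γ.norm ≤ 48 * n} ⊆
            FreeGroup.toWord ⁻¹' {l : List (X × Bool) | l.length ≤ 48 * n} := fun γ hγ => hγ
        exact Set.Finite.subset
          (Set.Finite.preimage (FreeGroup.toWord_injective.injOn)
            (List.finite_length_le _ _)) hsub
      refine Set.Finite.bddAbove (Set.Finite.subset (hfin.image normalDiv) ?_)
      rintro k ⟨γ, h1, h2, h3⟩
      exact ⟨γ, h2, h3⟩
    have hmem : normalDiv δ ∈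
        {k | ∃ γ : FreeGroup X, γ ≠ 1 ∧ γ.norm ≤ 48 * n ∧ normalDiv γ = k} :=
      ⟨δ, hδ1, hδnorm', rfl⟩
    have hle : normalDiv δ ≤ normalDivMax X (48 * n) := le_csSup hbdd hmem
    have hmM : m ≤ normalDivMax X (48 * n) := le_trans (le_of_lt hδdiv) hle
    have hcast : (m : ℝ) ≤ (normalDivMax X (48 * n) : ℝ) := by exact_mod_cast hmM
    have hMnn : (0 : ℝ) ≤ (normalDivMax X (48 * n) : ℝ) := Nat.cast_nonneg _
    calc (n : ℝ) ^ ((1 : ℝ) / 3) = t := rfl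
      _ ≤ (m : ℝ) := Nat.le_ceil t
      _ ≤ (normalDivMax X (48 * n) : ℝ) := hcast
      _ ≤ (48 : ℕ) * normalDivMax X (48 * n) := by
          push_cast
          linarith
end
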